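/- arXiv:1808.10188 — 2 statements merged into one kernel-verified Lean document; each statement's English description precedes it below -/
import Mathlib

section
/- Let a₁ = E[‖S − M‖_F²] > 0 and a₂ = ‖M − ηI‖_F² where η = tr(M)/p, for a random symmetric matrix S with E[S] = M. Then the minimizer over (α, β) ∈ ℝ² of MSE(α,β) = β²a₁ + ‖αI − (1−β)M‖_F² is given by β₀ = a₂/(a₂ + a₁) and α₀ = (1 − β₀)η, and the minimum value equals (1 − β₀)·a₂. -/
open Matrix

theorem optimal_shrinkage_minimizer {p : ℕ} (hp : 0 < p)
    (M : Matrix (Fin p) (Fin p) ℝ) (hM : M.PosDef)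
    (a₁ : ℝ) (ha₁ : 0 < a₁)
    (η a₂ : ℝ) (hη : η = M.trace / p)
    (ha₂ : a₂ = ((M - η • (1 : Matrix (Fin p) (Fin p) ℝ))ᵀ * (M - η • 1)).trace)
    (MSE : ℝ → ℝ → ℝ)
    (hMSE : ∀ α β : ℝ, MSE α β
      = β^2 * a₁ + ((α • (1 : Matrix (Fin p) (Fin p) ℝ) - (1 - β) • M)ᵀ
          * (α • 1 - (1 - β) • M)).trace)
    (β₀ α₀ : ℝ) (hβ₀ : β₀ = a₂ / (a₂ + a₁)) (hα₀ : α₀ = (1 - β₀) * η) :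
    (∀ α β : ℝ, MSE α₀ β₀ ≤ MSE α β) ∧ MSE α₀ β₀ = (1 - β₀) * a₂ := by
  have hpR : (0:ℝ) < (p:ℝ) := by exact_mod_cast hp
  have hMt : Mᵀ = M := by
    have := hM.isHermitian
    rw [← Matrix.conjTranspose_eq_transpose_of_trivial]; exact this
  set c : ℝ := M.trace with hc
  set t : ℝ := (M * M).trace with ht
  have key : ∀ s r : ℝ, ((s • (1 : Matrix (Fin p) (Fin p) ℝ) - r • M)ᵀ
      * (s • 1 - r • M)).trace
      = s^2 * (p:ℝ) - 2*s*r*c + r^2 * t := by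
    intro s r
    have h1 : (s • (1 : Matrix (Fin p) (Fin p) ℝ) - r • M)ᵀ
        = s • (1 : Matrix (Fin p) (Fin p) ℝ) - r • M := by
      simp [Matrix.transpose_sub, Matrix.transpose_smul, hMt]
    rw [h1, Matrix.sub_mul, Matrix.mul_sub, Matrix.mul_sub]
    simp only [Matrix.smul_mul, Matrix.mul_smul, Matrix.mul_one, Matrix.one_mul,
      Matrix.trace_sub, Matrix.trace_smul, smul_smul, smul_eq_mul, Matrix.trace_one]
    simp only [Fintype.card_fin, ← hc, ← ht]
    ring
  have hηc : η * (p:ℝ) = c := by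
    rw [hη]; field_simp
  have ha₂' : a₂ = t - (p:ℝ) * η^2 := by
    have hA : M - η • (1 : Matrix (Fin p) (Fin p) ℝ)
        = -(η • (1 : Matrix (Fin p) (Fin p) ℝ) - (1:ℝ) • M) := by
      simp [neg_sub]
    rw [ha₂, hA]
    rw [show ∀ A : Matrix (Fin p) (Fin p) ℝ, ((-A)ᵀ * (-A)) = Aᵀ * A by
      intro A; simp]
    rw [key η 1]
    linear_combination 2*η*hηc
  have tracepos : ∀ A : Matrix (Fin p) (Fin p) ℝ, 0 ≤ (Aᵀ * A).trace := by
    intro A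
    have h : (Aᵀ * A).trace = ∑ i, ∑ j, A j i * A j i := by
      simp [Matrix.trace, Matrix.diag, Matrix.mul_apply, Matrix.transpose_apply]
    rw [h]
    exact Finset.sum_nonneg fun i _ => Finset.sum_nonneg fun j _ => mul_self_nonneg _
  have ha₂nonneg : 0 ≤ a₂ := by rw [ha₂]; exact tracepos _
  have hsum : 0 < a₂ + a₁ := by linarith
  have hβeq : β₀ * (a₂ + a₁) = a₂ := by
    rw [hβ₀]; field_simp
  have hval : MSE α₀ β₀ = (1 - β₀) * a₂ := by
    rw [hMSE, key, hα₀]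
    linear_combination (2*(1-β₀)^2*η)*hηc + (-(1-β₀)^2)*ha₂' + β₀*hβeq
  refine ⟨?_, hval⟩
  intro α β
  rw [hval, hMSE, key]
  have hid : β^2*a₁ + (α^2*(p:ℝ) - 2*α*(1-β)*c + (1-β)^2*t) - (1-β₀)*a₂
      = (p:ℝ)*(α-(1-β)*η)^2 + (a₂+a₁)*(β-β₀)^2 := by
    linear_combination (2*α*(1-β))*hηc + (-(1-β)^2)*ha₂' + (2*β-β₀)*hβeq
  nlinarith [mul_nonneg hpR.le (sq_nonneg (α-(1-β)*η)),
    mul_nonneg hsum.le (sq_nonneg (β-β₀)), hid]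
end

section
/- Under the covariance structure var(vec(S)) = τ₁(I+K)(M⊗M) + τ₂ vec(M)vec(M)ᵀ with E[S]=M and 1 + τ₁ + τ₂ − 2τ₁·a/n ≠ 0 where a = n·τ₁/(1+τ₂), the estimator θ̂ = b·(tr(S²)/p − (a/n)·(tr S)²/p) with b = (1 + τ₁ + τ₂ − 2τ₁ a/n)⁻¹ satisfies E[θ̂] = tr(M²)/p. -/
open Matrix Kronecker MeasureTheory

/-- Column-stacking vectorization: `vec A (j, i) = A i j`. -/
def Matrix.vecCol {p : ℕ} (A : Matrix (Fin p) (Fin p) ℝ) : (Fin p × Fin p) → ℝ :=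
  fun q => A q.2 q.1

/-- The commutation matrix `K = Σ_{i,j} (e_i e_jᵀ) ⊗ (e_j e_iᵀ)`. -/
def commutationMatrix (p : ℕ) : Matrix (Fin p × Fin p) (Fin p × Fin p) ℝ :=
  ∑ i : Fin p, ∑ j : Fin p,
    (Matrix.single i j (1 : ℝ)) ⊗ₖ (Matrix.single j i (1 : ℝ))

set_option linter.unnecessarySeqFocus false in
lemma commutationMatrix_apply {p : ℕ} (q r : Fin p × Fin p) :
    commutationMatrix p q r = if q.1 = r.2 ∧ q.2 = r.1 then 1 else 0 := by
  have h1 : ∀ a b : Fin p, Matrix.single a b (1:ℝ) q.1 r.1 * Matrix.single b a 1 q.2 r.2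
      = if a = q.1 then (if b = q.2 then (if q.1 = r.2 ∧ q.2 = r.1 then 1 else 0) else 0) else 0 := by
    intro a b
    simp only [Matrix.single, Matrix.of_apply]
    by_cases h1 : a = q.1 <;> by_cases h2 : b = q.2 <;>
      by_cases h3 : q.1 = r.2 ∧ q.2 = r.1 <;> simp_all <;> aesop
  simp [commutationMatrix, Matrix.sum_apply, Matrix.kroneckerMap_apply, h1, Finset.sum_ite_eq']

theorem unbiased_sphericity_estimator {p n : ℕ} (hp : 0 < p) (hn : 1 ≤ n)
    {Ω : Type*} [MeasurableSpace Ω]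
    (μ : Measure Ω) [IsProbabilityMeasure μ]
    (S : Ω → Matrix (Fin p) (Fin p) ℝ) (M : Matrix (Fin p) (Fin p) ℝ)
    (hSsymm : ∀ ω, (S ω).IsSymm) (hMsymm : M.IsSymm)
    (hInt : ∀ i j, Integrable (fun ω => S ω i j) μ)
    (hInt2 : ∀ i j k l, Integrable (fun ω => S ω i j * S ω k l) μ)
    (hE : ∀ i j, ∫ ω, S ω i j ∂μ = M i j)
    (τ₁ τ₂ : ℝ) (hτ₂ : τ₂ ≠ -1)
    (hVar : ∀ q r : Fin p × Fin p,
      ∫ ω, ((S ω).vecCol q - M.vecCol q) * ((S ω).vecCol r - M.vecCol r) ∂μ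
        = (τ₁ • ((1 + commutationMatrix p) * (M ⊗ₖ M))
            + τ₂ • Matrix.vecMulVec M.vecCol M.vecCol) q r)
    (a b : ℝ) (ha : a = n * τ₁ / (1 + τ₂))
    (hb : b = (1 + τ₁ + τ₂ - 2 * τ₁ * a / n)⁻¹)
    (hden : 1 + τ₁ + τ₂ - 2 * τ₁ * a / n ≠ 0) :
    ∫ ω, b * ((S ω * S ω).trace / p - (a / n) * ((S ω).trace)^2 / p) ∂μ
      = (M * M).trace / p := by
  have hτ₂' : (1 : ℝ) + τ₂ ≠ 0 := fun h => hτ₂ (by linarith)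
  have hn' : (n : ℝ) ≠ 0 := Nat.cast_ne_zero.mpr (by omega)
  have hp' : (p : ℝ) ≠ 0 := Nat.cast_ne_zero.mpr (by omega)
  -- (K * (M ⊗ M)) entry
  have hKM : ∀ i j k l : Fin p,
      ((commutationMatrix p) * (M ⊗ₖ M)) (j, i) (l, k) = M i l * M j k := by
    intro i j k l
    rw [Matrix.mul_apply]
    have h : ∀ q : Fin p × Fin p,
        commutationMatrix p (j, i) q * (M ⊗ₖ M) q (l, k)
          = if q = (i, j) then M i l * M j k else 0 := by
      intro q
      rw [commutationMatrix_apply]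
      rcases q with ⟨q1, q2⟩
      by_cases h1 : q1 = i <;> by_cases h2 : q2 = j <;>
        simp_all [Matrix.kroneckerMap_apply, Prod.ext_iff] <;> aesop
    rw [Finset.sum_congr rfl fun q _ => h q]
    simp
  -- second moments
  have hmom : ∀ i j k l : Fin p, ∫ ω, S ω i j * S ω k l ∂μ
      = (1 + τ₂) * (M i j * M k l) + τ₁ * (M j l * M i k + M i l * M j k) := by
    intro i j k l
    have hv := hVar (j, i) (l, k)
    have hexp : (fun ω => ((S ω).vecCol (j,i) - M.vecCol (j,i)) * ((S ω).vecCol (l,k) - M.vecCol (l,k)))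
        = fun ω => S ω i j * S ω k l - M i j * S ω k l - M k l * S ω i j + M i j * M k l := by
      funext ω; simp only [Matrix.vecCol]; ring
    have I3 : Integrable (fun ω => M i j * S ω k l) μ := (hInt k l).const_mul _
    have I4 : Integrable (fun ω => M k l * S ω i j) μ := (hInt i j).const_mul _
    have I1 : Integrable (fun ω => S ω i j * S ω k l - M i j * S ω k l) μ := (hInt2 i j k l).sub I3
    have I2 : Integrable (fun ω => S ω i j * S ω k l - M i j * S ω k l - M k l * S ω i j) μ := I1.sub I4
    rw [hexp, integral_add I2 (integrable_const _), integral_sub I1 I4,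
      integral_sub (hInt2 i j k l) I3, integral_const_mul, integral_const_mul,
      hE, hE, integral_const] at hv
    simp only [measure_univ, ENNReal.toReal_one, probReal_univ, smul_eq_mul, one_mul] at hv
    have hrhs : (τ₁ • ((1 + commutationMatrix p) * (M ⊗ₖ M))
        + τ₂ • Matrix.vecMulVec M.vecCol M.vecCol) (j, i) (l, k)
        = τ₁ * (M j l * M i k + M i l * M j k) + τ₂ * (M i j * M k l) := by
      simp only [Matrix.add_apply, Matrix.smul_apply, Matrix.add_mul, Matrix.one_mul,
        Matrix.vecMulVec_apply, smul_eq_mul]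
      rw [hKM]
      simp only [Matrix.kroneckerMap_apply, Matrix.vecCol]
      try ring
    rw [hrhs] at hv
    nlinarith [hv]
  -- integrable trace functions
  have hf : (fun ω => (S ω * S ω).trace) = fun ω => ∑ i : Fin p, ∑ j : Fin p, S ω i j * S ω j i := by
    funext ω
    simp only [Matrix.trace, Matrix.mul_apply, Matrix.diag]
  have hg : (fun ω => ((S ω).trace)^2) = fun ω => ∑ i : Fin p, ∑ j : Fin p, S ω i i * S ω j j := by
    funext ω
    simp [Matrix.trace, Matrix.diag, sq, Finset.sum_mul_sum]
  have hfInt : Integrable (fun ω => (S ω * S ω).trace) μ := by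
    rw [hf]; exact integrable_finset_sum _ fun i _ => integrable_finset_sum _ fun j _ => hInt2 i j j i
  have hgInt : Integrable (fun ω => ((S ω).trace)^2) μ := by
    rw [hg]; exact integrable_finset_sum _ fun i _ => integrable_finset_sum _ fun j _ => hInt2 i i j j
  -- expected traces
  have htr : (M * M).trace = ∑ i : Fin p, ∑ j : Fin p, M i j * M j i := by
    simp [Matrix.trace, Matrix.mul_apply, Matrix.diag]
  have htr1 : M.trace = ∑ i : Fin p, M i i := by simp [Matrix.trace, Matrix.diag]
  have hT2 : ∫ ω, (S ω * S ω).trace ∂μ = (1 + τ₁ + τ₂) * (M * M).trace + τ₁ * M.trace ^ 2 := by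
    rw [hf]
    rw [integral_finset_sum _ fun i _ => integrable_finset_sum _ fun j _ => hInt2 i j j i]
    have h1 : ∀ i ∈ Finset.univ, ∫ ω, ∑ j : Fin p, S ω i j * S ω j i ∂μ
        = ∑ j : Fin p, ((1 + τ₂) * (M i j * M j i) + τ₁ * (M j i * M i j + M i i * M j j)) := by
      intro i _
      rw [integral_finset_sum _ fun j _ => hInt2 i j j i]
      exact Finset.sum_congr rfl fun j _ => hmom i j j i
    rw [Finset.sum_congr rfl h1, htr, htr1, sq, Finset.sum_mul_sum]
    rw [Finset.mul_sum, Finset.mul_sum, ← Finset.sum_add_distrib]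
    refine Finset.sum_congr rfl fun i _ => ?_
    rw [Finset.mul_sum, Finset.mul_sum, ← Finset.sum_add_distrib]
    refine Finset.sum_congr rfl fun j _ => ?_
    ring
  have hT1 : ∫ ω, ((S ω).trace)^2 ∂μ = (1 + τ₂) * M.trace ^ 2 + 2 * τ₁ * (M * M).trace := by
    rw [hg]
    rw [integral_finset_sum _ fun i _ => integrable_finset_sum _ fun j _ => hInt2 i i j j]
    have h1 : ∀ i ∈ Finset.univ, ∫ ω, ∑ j : Fin p, S ω i i * S ω j j ∂μ
        = ∑ j : Fin p, ((1 + τ₂) * (M i i * M j j) + τ₁ * (2 * (M i j * M j i))) := by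
      intro i _
      rw [integral_finset_sum _ fun j _ => hInt2 i i j j]
      refine Finset.sum_congr rfl fun j _ => ?_
      rw [hmom i i j j]
      have hsym : M j i = M i j := hMsymm.apply i j
      rw [hsym]; ring
    rw [Finset.sum_congr rfl h1, htr, htr1, sq, Finset.sum_mul_sum]
    rw [Finset.mul_sum, Finset.mul_sum, ← Finset.sum_add_distrib]
    refine Finset.sum_congr rfl fun i _ => ?_
    rw [Finset.mul_sum, Finset.mul_sum, ← Finset.sum_add_distrib]
    refine Finset.sum_congr rfl fun j _ => ?_
    ring
  -- put it together
  have hsplit : (fun ω => b * ((S ω * S ω).trace / p - (a / n) * ((S ω).trace)^2 / p))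
      = fun ω => (b / p) * (S ω * S ω).trace - (b * a / (n * p)) * ((S ω).trace)^2 := by
    funext ω; field_simp
  rw [hsplit, integral_sub (hfInt.const_mul _) (hgInt.const_mul _),
    integral_const_mul, integral_const_mul, hT2, hT1]
  have haeq : a * (1 + τ₂) = n * τ₁ := by rw [ha]; field_simp
  have hbeq : b * ((1 + τ₁ + τ₂) * n - 2 * τ₁ * a) = n := by
    rw [hb]
    have h2 : (1 + τ₁ + τ₂) * (n:ℝ) - 2 * τ₁ * a = (1 + τ₁ + τ₂ - 2 * τ₁ * a / n) * n := by
      field_simp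
      try ring
    rw [h2, ← mul_assoc, inv_mul_cancel₀ hden, one_mul]
  have key : b * (((1 + τ₁ + τ₂) * (M*M).trace + τ₁ * M.trace^2) * n)
      - b * a * ((1 + τ₂) * M.trace^2 + 2 * τ₁ * (M*M).trace) = (M*M).trace * n := by
    linear_combination (M*M).trace * hbeq - (b * M.trace^2) * haeq
  have final : b / p * ((1 + τ₁ + τ₂) * (M*M).trace + τ₁ * M.trace^2)
      - b * a / (n * p) * ((1 + τ₂) * M.trace^2 + 2 * τ₁ * (M*M).trace)
      = (b * (((1 + τ₁ + τ₂) * (M*M).trace + τ₁ * M.trace^2) * n)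
          - b * a * ((1 + τ₂) * M.trace^2 + 2 * τ₁ * (M*M).trace)) / (n * p) := by
    field_simp
  rw [final, key, mul_comm ((n:ℝ)) ((p:ℝ)), mul_div_mul_right _ _ hn']
end
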